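/- Under the power-law assumption with exponent β ∈ (0,1), the total running time of the priority queue algorithm summed over all n target nodes, namely Σ_v Σ_u ⌊π(u,v)/(αε)⌋·|in(u)|, is at most c·n·(m/n^{1/β})·(1/(αε))^{1/β} for c = (1-β)^{(1/β)-1}, so the average per-target running time is O((m/n^{1/β})·(1/(αε))^{1/β}). -/

import Mathlib

open Finset

lemma sum_rpow_le_aux (β : ℝ) (hβ0 : 0 < β) (hβ1 : β < 1) (K : ℕ) :
    ∑ j ∈ Finset.range K, ((j : ℝ) + 1) ^ (-β) ≤ (K : ℝ) ^ (1 - β) / (1 - β) := by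
  have h1β : (0:ℝ) < 1 - β := by linarith
  rcases Nat.eq_zero_or_pos K with hK | hK
  · simp [hK, Real.zero_rpow h1β.ne']
  · have hanti : AntitoneOn (fun x : ℝ => x ^ (-β)) (Set.Icc ((1:ℕ):ℝ) ((K:ℕ):ℝ)) := by
      intro x hx y hy hxy
      exact Real.rpow_le_rpow_of_nonpos (by have := hx.1; push_cast at this ⊢; linarith) hxy
        (by linarith)
    have h2 := AntitoneOn.sum_le_integral_Ico hK hanti
    have hint : (∫ x in ((1:ℕ):ℝ)..((K:ℕ):ℝ), x ^ (-β))
        = ((K:ℝ) ^ (1 - β) - 1) / (1 - β) := by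
      rw [integral_rpow (Or.inl (by linarith))]
      push_cast
      rw [Real.one_rpow]
      ring_nf
    rw [hint] at h2
    have h3 : ∑ j ∈ Finset.range K, ((j : ℝ) + 1) ^ (-β)
        = 1 + ∑ i ∈ Finset.Ico 1 K, (((i + 1 : ℕ) : ℝ)) ^ (-β) := by
      rw [Finset.range_eq_Ico, Finset.sum_eq_sum_Ico_succ_bot hK]
      push_cast
      norm_num
    rw [h3]
    have h4 : (1:ℝ) ≤ 1 / (1 - β) := by
      rw [le_div_iff₀ h1β]; linarith
    have h5 : ((K:ℝ) ^ (1 - β) - 1) / (1 - β) + 1 / (1-β) = (K:ℝ) ^ (1-β) / (1-β) := by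
      field_simp
      ring
    linarith

lemma key_sum_aux (β η A : ℝ) (hβ0 : 0 < β) (hβ1 : β < 1) (hη : 0 < η) (hA : 0 < A) (N : ℕ) :
    ∑ i ∈ Finset.range N, (⌊η * ((i : ℝ) + 1) ^ (-β) / A⌋₊ : ℝ)
      ≤ (η / A) ^ (1 / β) / (1 - β) := by
  have h1β : (0:ℝ) < 1 - β := by linarith
  have hηA : 0 < η / A := div_pos hη hA
  set t := (η / A) ^ (1 / β) with ht
  have htpos : 0 < t := Real.rpow_pos_of_pos hηA _
  have htβ : t ^ β = η / A := by
    rw [ht, ← Real.rpow_mul hηA.le, one_div_mul_cancel hβ0.ne', Real.rpow_one]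
  set K := ⌊t⌋₊ with hK
  have step1 : ∀ i ∈ Finset.range N, (⌊η * ((i : ℝ) + 1) ^ (-β) / A⌋₊ : ℝ)
      ≤ if i + 1 ≤ K then (η / A) * ((i : ℝ) + 1) ^ (-β) else 0 := by
    intro i _
    have hip : (0:ℝ) < (i : ℝ) + 1 := by positivity
    have hre : η * ((i : ℝ) + 1) ^ (-β) / A = (η / A) * ((i : ℝ) + 1) ^ (-β) := by ring
    split_ifs with h
    · calc ((⌊η * ((i : ℝ) + 1) ^ (-β) / A⌋₊ : ℝ)) ≤ η * ((i : ℝ) + 1) ^ (-β) / A :=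
          Nat.floor_le (by positivity)
        _ = (η / A) * ((i : ℝ) + 1) ^ (-β) := hre
    · have hlt : t < (i : ℝ) + 1 := by
        have := (Nat.floor_lt htpos.le).mp (by omega : K < i + 1)
        push_cast at this; linarith
      have hpow : η / A < ((i : ℝ) + 1) ^ β := by
        calc η / A = t ^ β := htβ.symm
          _ < ((i : ℝ) + 1) ^ β := Real.rpow_lt_rpow htpos.le hlt hβ0
      have : η * ((i : ℝ) + 1) ^ (-β) / A < 1 := by
        rw [hre, Real.rpow_neg hip.le, ← div_eq_mul_inv, div_lt_one (Real.rpow_pos_of_pos hip β)]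
        exact hpow
      simp [Nat.floor_eq_zero.mpr this]
  calc ∑ i ∈ Finset.range N, (⌊η * ((i : ℝ) + 1) ^ (-β) / A⌋₊ : ℝ)
      ≤ ∑ i ∈ Finset.range N,
          (if i + 1 ≤ K then (η / A) * ((i : ℝ) + 1) ^ (-β) else 0) :=
        Finset.sum_le_sum step1
    _ = ∑ i ∈ (Finset.range N).filter (fun i => i + 1 ≤ K),
          (η / A) * ((i : ℝ) + 1) ^ (-β) := (Finset.sum_filter _ _).symm
    _ ≤ ∑ i ∈ Finset.range K, (η / A) * ((i : ℝ) + 1) ^ (-β) := by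
        apply Finset.sum_le_sum_of_subset_of_nonneg
        · intro i hi
          simp only [Finset.mem_filter, Finset.mem_range] at hi ⊢
          omega
        · intro i _ _
          positivity
    _ = (η / A) * ∑ i ∈ Finset.range K, ((i : ℝ) + 1) ^ (-β) := (Finset.mul_sum _ _ _).symm
    _ ≤ (η / A) * ((K : ℝ) ^ (1 - β) / (1 - β)) := by
        exact mul_le_mul_of_nonneg_left (sum_rpow_le_aux β hβ0 hβ1 K) hηA.le
    _ ≤ (η / A) * (t ^ (1 - β) / (1 - β)) := by
        have hKt : (K : ℝ) ≤ t := Nat.floor_le htpos.le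
        have := Real.rpow_le_rpow (Nat.cast_nonneg K) hKt h1β.le
        exact mul_le_mul_of_nonneg_left (by gcongr) hηA.le
    _ = t / (1 - β) := by
        rw [← htβ, mul_div_assoc', ← Real.rpow_add htpos]
        norm_num

/-- Under the power-law assumption with exponent `β ∈ (0,1)` (for each
source `u` the values `π(u,·)`, sorted decreasingly, equal `η·i^{-β}` with
`η = (1-β)/n^{1-β}`), the total running time summed over all `n` targets,
`Σ_v Σ_u ⌊π(u,v)/(αε)⌋·|in(u)|`, is at most `c·n·(m/n^{1/β})·(1/(αε))^{1/β}` with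
`c = (1-β)^{(1/β)-1}`; hence the average per-target running time is
`O((m/n^{1/β})·(1/(αε))^{1/β})`. -/
theorem power_law_average_running_time
    {V : Type*} [Fintype V] [Nonempty V]
    (β : ℝ) (hβ0 : 0 < β) (hβ1 : β < 1)
    (n : ℝ) (hn : n = (Fintype.card V : ℝ))
    (indeg : V → ℕ) (m : ℝ) (hm : m = ∑ u : V, (indeg u : ℝ))
    (η : ℝ) (hη : η = (1 - β) / n ^ (1 - β))
    (α ε : ℝ) (hαε : 0 < α * ε)
    (π : V → V → ℝ)
    (ord : V → (V ≃ Fin (Fintype.card V)))  -- sorting of targets for each source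
    (hpow : ∀ u v, π u v = η * (((ord u v : ℕ) : ℝ) + 1) ^ (-β))
    (c : ℝ) (hc : c = (1 - β) ^ (1 / β - 1)) :
    ∑ v : V, ∑ u : V, (⌊π u v / (α * ε)⌋₊ : ℝ) * (indeg u : ℝ)
      ≤ c * n * (m / n ^ (1 / β)) * (1 / (α * ε)) ^ (1 / β) := by
  have hN : 0 < Fintype.card V := Fintype.card_pos
  set A := α * ε with hA
  have hn1 : (1:ℝ) ≤ n := by rw [hn]; exact_mod_cast hN
  have hn0 : (0:ℝ) < n := by linarith
  have h1β : (0:ℝ) < 1 - β := by linarith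
  have hη0 : 0 < η := by rw [hη]; positivity
  set S := (η / A) ^ (1 / β) / (1 - β) with hS
  have hper : ∀ u : V, ∑ v : V, (⌊π u v / A⌋₊ : ℝ) ≤ S := by
    intro u
    have h1 : ∑ v : V, (⌊π u v / A⌋₊ : ℝ)
        = ∑ i ∈ Finset.range (Fintype.card V),
            (⌊η * ((i : ℝ) + 1) ^ (-β) / A⌋₊ : ℝ) := by
      rw [← Fin.sum_univ_eq_sum_range (fun i => (⌊η * ((i : ℝ) + 1) ^ (-β) / A⌋₊ : ℝ))]
      rw [← Equiv.sum_comp (ord u)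
        (fun i : Fin (Fintype.card V) => (⌊η * (((i : ℕ) : ℝ) + 1) ^ (-β) / A⌋₊ : ℝ))]
      exact Finset.sum_congr rfl fun v _ => by rw [hpow u v]
    rw [h1]
    exact key_sum_aux β η A hβ0 hβ1 hη0 hαε _
  have htot : ∑ u : V, ∑ v : V, (⌊π u v / A⌋₊ : ℝ) * (indeg u : ℝ) ≤ m * S := by
    calc ∑ u : V, ∑ v : V, (⌊π u v / A⌋₊ : ℝ) * (indeg u : ℝ)
        = ∑ u : V, (∑ v : V, (⌊π u v / A⌋₊ : ℝ)) * (indeg u : ℝ) :=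
          Finset.sum_congr rfl fun u _ => (Finset.sum_mul _ _ _).symm
      _ ≤ ∑ u : V, S * (indeg u : ℝ) :=
          Finset.sum_le_sum fun u _ =>
            mul_le_mul_of_nonneg_right (hper u) (Nat.cast_nonneg _)
      _ = m * S := by rw [← Finset.mul_sum, ← hm, mul_comm]
  have hn' : n ≠ 0 := hn0.ne'
  have hnb : n ^ (1 / β) ≠ 0 := (Real.rpow_pos_of_pos hn0 _).ne'
  have hAb : A ^ (1 / β) ≠ 0 := (Real.rpow_pos_of_pos hαε _).ne'
  have e1 : η / A = (1 - β) * ((n ^ (1 - β))⁻¹ * A⁻¹) := by rw [hη]; ring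
  have e3 : (n ^ (1 - β)) ^ (1 / β) = n ^ (1 / β) * n⁻¹ := by
    rw [← Real.rpow_mul hn0.le]
    have hexp : (1 - β) * (1 / β) = 1 / β - 1 := by field_simp
    rw [hexp, Real.rpow_sub hn0, Real.rpow_one, div_eq_mul_inv]
  have e4 : (1 - β) ^ (1 / β) = c * (1 - β) := by
    rw [hc, Real.rpow_sub h1β, Real.rpow_one]
    field_simp
  have e2 : (η / A) ^ (1 / β)
      = (1 - β) ^ (1 / β) * (((n ^ (1 - β)) ^ (1 / β))⁻¹ * (A ^ (1 / β))⁻¹) := by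
    rw [e1, Real.mul_rpow h1β.le (by positivity), Real.mul_rpow (by positivity) (by positivity),
      Real.inv_rpow (by positivity), Real.inv_rpow hαε.le]
  have hSkey : S = c * n * (n ^ (1 / β))⁻¹ * (1 / A) ^ (1 / β) := by
    rw [hS, e2, e3, e4, show (1:ℝ)/A = A⁻¹ from one_div A, Real.inv_rpow hαε.le]
    field_simp
  rw [Finset.sum_comm]
  refine htot.trans (le_of_eq ?_)
  rw [hSkey]
  ring
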